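/- Let η : U → ℝ be a real harmonic function on an open subset U of ℝ² with η ≠ 0 and (η_u)² + (η_v)² ≠ 0 on U. Then the positive real function ν = ((η_u)² + (η_v)²)/η² satisfies Δ(ln ν) − 2ν = 0. -/

import Mathlib

open Complex

noncomputable def pdu {E : Type*} [NormedAddCommGroup E] [NormedSpace ℝ E]
    (f : ℝ × ℝ → E) (p : ℝ × ℝ) : E := fderiv ℝ f p (1, 0)

noncomputable def pdv {E : Type*} [NormedAddCommGroup E] [NormedSpace ℝ E]
    (f : ℝ × ℝ → E) (p : ℝ × ℝ) : E := fderiv ℝ f p (0, 1)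

noncomputable def lap {E : Type*} [NormedAddCommGroup E] [NormedSpace ℝ E]
    (f : ℝ × ℝ → E) (p : ℝ × ℝ) : E := pdu (pdu f) p + pdv (pdv f) p

private lemma pdu_eq {f : ℝ × ℝ → ℝ} {L : (ℝ × ℝ) →L[ℝ] ℝ} {p : ℝ × ℝ}
    (h : HasFDerivAt f L p) : pdu f p = L (1, 0) := by
  show fderiv ℝ f p (1, 0) = L (1, 0)
  rw [h.fderiv]

private lemma pdv_eq {f : ℝ × ℝ → ℝ} {L : (ℝ × ℝ) →L[ℝ] ℝ} {p : ℝ × ℝ}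
    (h : HasFDerivAt f L p) : pdv f p = L (0, 1) := by
  show fderiv ℝ f p (0, 1) = L (0, 1)
  rw [h.fderiv]

private lemma pdu_congr {f g : ℝ × ℝ → ℝ} {p : ℝ × ℝ} (h : f =ᶠ[nhds p] g) :
    pdu f p = pdu g p := by
  show fderiv ℝ f p (1, 0) = fderiv ℝ g p (1, 0)
  rw [h.fderiv_eq]

private lemma pdv_congr {f g : ℝ × ℝ → ℝ} {p : ℝ × ℝ} (h : f =ᶠ[nhds p] g) :
    pdv f p = pdv g p := by
  show fderiv ℝ f p (0, 1) = fderiv ℝ g p (0, 1)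
  rw [h.fderiv_eq]

/-- the real-linear inclusion ℝ × ℝ → ℂ -/
noncomputable def iotaL : (ℝ × ℝ) →L[ℝ] ℂ :=
  (ContinuousLinearMap.fst ℝ ℝ ℝ).smulRight (1 : ℂ) +
    (ContinuousLinearMap.snd ℝ ℝ ℝ).smulRight I

private lemma iotaL_apply (r : ℝ × ℝ) : iotaL r = ⟨r.1, r.2⟩ := by
  simp [iotaL, Complex.ext_iff]

private lemma hasFDerivAt_iota (q : ℝ × ℝ) :
    HasFDerivAt (fun r : ℝ × ℝ => (⟨r.1, r.2⟩ : ℂ)) iotaL q := by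
  apply iotaL.hasFDerivAt.congr_of_eventuallyEq
  exact Filter.Eventually.of_forall fun r => (iotaL_apply r).symm

private lemma clm_ext_complex {L M : ℂ →L[ℝ] ℂ} (h1 : L 1 = M 1) (hI : L I = M I) :
    L = M := by
  ext z
  have hz : z = (z.re : ℝ) • (1 : ℂ) + (z.im : ℝ) • I := by
    rw [Complex.real_smul, Complex.real_smul, mul_one, Complex.re_add_im]
  rw [hz, map_add, map_add, map_smul, map_smul, map_smul, map_smul, h1, hI]

/-- From a complex derivative of `F` at `z`, derivatives of the real and imaginary
parts of `F` composed with the inclusion `ℝ × ℝ → ℂ`. -/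
private lemma holo_comp_re_im {F : ℂ → ℂ} {z : ℂ} {w : ℂ} (hF : HasDerivAt F w z) :
    (∃ L : (ℝ × ℝ) →L[ℝ] ℝ,
        HasFDerivAt (fun r : ℝ × ℝ => (F ⟨r.1, r.2⟩).re) L (z.re, z.im) ∧
        L (1, 0) = w.re ∧ L (0, 1) = -w.im) ∧
    (∃ L : (ℝ × ℝ) →L[ℝ] ℝ,
        HasFDerivAt (fun r : ℝ × ℝ => (F ⟨r.1, r.2⟩).im) L (z.re, z.im) ∧
        L (1, 0) = w.im ∧ L (0, 1) = w.re) := by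
  have hF' : HasFDerivAt F
      ((ContinuousLinearMap.smulRight (1 : ℂ →L[ℂ] ℂ) w).restrictScalars ℝ) z :=
    hF.hasFDerivAt.restrictScalars ℝ
  have hι : HasFDerivAt (fun r : ℝ × ℝ => (⟨r.1, r.2⟩ : ℂ)) iotaL (z.re, z.im) :=
    hasFDerivAt_iota _
  have hcomp : HasFDerivAt (fun r : ℝ × ℝ => F ⟨r.1, r.2⟩)
      (((ContinuousLinearMap.smulRight (1 : ℂ →L[ℂ] ℂ) w).restrictScalars ℝ).comp iotaL)
      (z.re, z.im) := by
    exact hF'.comp (z.re, z.im) hι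
  have h10 : iotaL ((1 : ℝ), (0 : ℝ)) = 1 := by rw [iotaL_apply]; simp [Complex.ext_iff]
  have h01 : iotaL ((0 : ℝ), (1 : ℝ)) = I := by rw [iotaL_apply]; simp [Complex.ext_iff]
  constructor
  · refine ⟨Complex.reCLM.comp
      ((((ContinuousLinearMap.smulRight (1 : ℂ →L[ℂ] ℂ) w).restrictScalars ℝ)).comp iotaL),
      Complex.reCLM.hasFDerivAt.comp _ hcomp, ?_, ?_⟩ <;>
      simp [h10, h01, Complex.ext_iff]
  · refine ⟨Complex.imCLM.comp
      ((((ContinuousLinearMap.smulRight (1 : ℂ →L[ℂ] ℂ) w).restrictScalars ℝ)).comp iotaL),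
      Complex.imCLM.hasFDerivAt.comp _ hcomp, ?_, ?_⟩ <;>
      simp [h10, h01, Complex.ext_iff]

private lemma key (U : Set (ℝ × ℝ)) (hU : IsOpen U) (η : ℝ × ℝ → ℝ)
    (hη : ContDiffOn ℝ 2 η U)
    (hharm : ∀ p ∈ U, lap η p = 0) :
    ∃ c d C D : ℝ × ℝ → ℝ, ∀ q ∈ U,
      (∃ L : (ℝ × ℝ) →L[ℝ] ℝ, HasFDerivAt η L q ∧ L (1, 0) = pdu η q ∧ L (0, 1) = pdv η q) ∧
      (∃ L : (ℝ × ℝ) →L[ℝ] ℝ, HasFDerivAt (fun r => pdu η r) L q ∧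
        L (1, 0) = c q ∧ L (0, 1) = -d q) ∧
      (∃ L : (ℝ × ℝ) →L[ℝ] ℝ, HasFDerivAt (fun r => pdv η r) L q ∧
        L (1, 0) = -d q ∧ L (0, 1) = -c q) ∧
      (∃ L : (ℝ × ℝ) →L[ℝ] ℝ, HasFDerivAt c L q ∧ L (1, 0) = C q ∧ L (0, 1) = -D q) ∧
      (∃ L : (ℝ × ℝ) →L[ℝ] ℝ, HasFDerivAt d L q ∧ L (1, 0) = D q ∧ L (0, 1) = C q) := by
  classical
  set f : ℂ → ℂ := fun z => ⟨pdu η (z.re, z.im), -pdv η (z.re, z.im)⟩ with hfdef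
  have hVopen : IsOpen {z : ℂ | (z.re, z.im) ∈ U} :=
    hU.preimage (Complex.continuous_re.prodMk Complex.continuous_im)
  -- f is complex differentiable on V
  have hdiff : ∀ z ∈ {z : ℂ | (z.re, z.im) ∈ U}, DifferentiableAt ℂ f z := by
    intro z hz
    have hq : (z.re, z.im) ∈ U := hz
    have hc2 : ContDiffAt ℝ 2 η (z.re, z.im) := hη.contDiffAt (hU.mem_nhds hq)
    have hc1 : ContDiffAt ℝ 1 (fderiv ℝ η) (z.re, z.im) :=
      hc2.fderiv_right (by norm_num)
    have hdB : DifferentiableAt ℝ (fderiv ℝ η) (z.re, z.im) := hc1.differentiableAt one_ne_zero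
    set B := fderiv ℝ (fderiv ℝ η) (z.re, z.im) with hBdef
    have hBd : HasFDerivAt (fderiv ℝ η) B (z.re, z.im) := hdB.hasFDerivAt
    have hev : ∀ᶠ r in nhds (z.re, z.im), HasFDerivAt η (fderiv ℝ η r) r := by
      filter_upwards [hU.mem_nhds hq] with r hr
      exact ((hη.contDiffAt (hU.mem_nhds hr)).differentiableAt (by norm_num)).hasFDerivAt
    have hsymm : ∀ v w : ℝ × ℝ, B v w = B w v :=
      second_derivative_symmetric_of_eventually hev hBd
    -- derivatives of the two partials
    have Ha : HasFDerivAt (fun r => fderiv ℝ η r ((1 : ℝ), (0 : ℝ)))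
        ((fderiv ℝ η (z.re, z.im)).comp (0 : (ℝ × ℝ) →L[ℝ] (ℝ × ℝ)) +
          B.flip ((1 : ℝ), (0 : ℝ))) (z.re, z.im) :=
      hBd.clm_apply (hasFDerivAt_const _ _)
    have Hb : HasFDerivAt (fun r => fderiv ℝ η r ((0 : ℝ), (1 : ℝ)))
        ((fderiv ℝ η (z.re, z.im)).comp (0 : (ℝ × ℝ) →L[ℝ] (ℝ × ℝ)) +
          B.flip ((0 : ℝ), (1 : ℝ))) (z.re, z.im) :=
      hBd.clm_apply (hasFDerivAt_const _ _)
    -- harmonicity in terms of B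
    have hharmB : B (1, 0) (1, 0) + B (0, 1) (0, 1) = 0 := by
      have e1 : pdu (pdu η) (z.re, z.im) = B (1, 0) (1, 0) := by
        show pdu (fun r => fderiv ℝ η r ((1 : ℝ), (0 : ℝ))) (z.re, z.im) = B (1, 0) (1, 0)
        rw [pdu_eq Ha]; simp
      have e2 : pdv (pdv η) (z.re, z.im) = B (0, 1) (0, 1) := by
        show pdv (fun r => fderiv ℝ η r ((0 : ℝ), (1 : ℝ))) (z.re, z.im) = B (0, 1) (0, 1)
        rw [pdv_eq Hb]; simp
      have := hharm _ hq
      rw [lap, e1, e2] at this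
      exact this
    -- real derivative of f
    have Hρ : HasFDerivAt (fun z : ℂ => ((z.re, z.im) : ℝ × ℝ))
        (Complex.reCLM.prod Complex.imCLM) z :=
      (Complex.reCLM.prod Complex.imCLM).hasFDerivAt
    have T1 : HasFDerivAt (fun z : ℂ => ((pdu η (z.re, z.im) : ℝ) : ℂ))
        (Complex.ofRealCLM.comp
          (((fderiv ℝ η (z.re, z.im)).comp (0 : (ℝ × ℝ) →L[ℝ] (ℝ × ℝ)) +
            B.flip ((1 : ℝ), (0 : ℝ))).comp (Complex.reCLM.prod Complex.imCLM))) z :=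
      Complex.ofRealCLM.hasFDerivAt.comp z (by exact Ha.comp z Hρ)
    have T2 : HasFDerivAt (fun z : ℂ => ((pdv η (z.re, z.im) : ℝ) : ℂ))
        (Complex.ofRealCLM.comp
          (((fderiv ℝ η (z.re, z.im)).comp (0 : (ℝ × ℝ) →L[ℝ] (ℝ × ℝ)) +
            B.flip ((0 : ℝ), (1 : ℝ))).comp (Complex.reCLM.prod Complex.imCLM))) z :=
      Complex.ofRealCLM.hasFDerivAt.comp z (by exact Hb.comp z Hρ)
    have Hf : HasFDerivAt f
        (Complex.ofRealCLM.comp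
          (((fderiv ℝ η (z.re, z.im)).comp (0 : (ℝ × ℝ) →L[ℝ] (ℝ × ℝ)) +
            B.flip ((1 : ℝ), (0 : ℝ))).comp (Complex.reCLM.prod Complex.imCLM)) +
         (-I) • (Complex.ofRealCLM.comp
          (((fderiv ℝ η (z.re, z.im)).comp (0 : (ℝ × ℝ) →L[ℝ] (ℝ × ℝ)) +
            B.flip ((0 : ℝ), (1 : ℝ))).comp (Complex.reCLM.prod Complex.imCLM)))) z := by
      have h0 := T1.add (T2.mul_const (-I))
      apply HasFDerivAt.congr_of_eventuallyEq h0
      apply Filter.Eventually.of_forall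
      intro y
      rw [hfdef]
      simp [Complex.ext_iff]
    set w : ℂ := ⟨B (1, 0) (1, 0), -B (1, 0) (0, 1)⟩ with hwdef
    have hlin : (ContinuousLinearMap.smulRight (1 : ℂ →L[ℂ] ℂ) w).restrictScalars ℝ =
        (Complex.ofRealCLM.comp
          (((fderiv ℝ η (z.re, z.im)).comp (0 : (ℝ × ℝ) →L[ℝ] (ℝ × ℝ)) +
            B.flip ((1 : ℝ), (0 : ℝ))).comp (Complex.reCLM.prod Complex.imCLM)) +
         (-I) • (Complex.ofRealCLM.comp
          (((fderiv ℝ η (z.re, z.im)).comp (0 : (ℝ × ℝ) →L[ℝ] (ℝ × ℝ)) +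
            B.flip ((0 : ℝ), (1 : ℝ))).comp (Complex.reCLM.prod Complex.imCLM)))) := by
      apply clm_ext_complex
      · simp [hwdef, Complex.ext_iff]
      · have hs : B (0, 1) (1, 0) = B (1, 0) (0, 1) := hsymm _ _
        have hh : B (0, 1) (0, 1) = -B (1, 0) (1, 0) := by linarith [hharmB]
        simp [hwdef, Complex.ext_iff, hs, hh]
    exact (hasFDerivAt_of_restrictScalars ℝ Hf hlin).differentiableAt
  have hdiffOn : DifferentiableOn ℂ f {z : ℂ | (z.re, z.im) ∈ U} := fun z hz =>
    (hdiff z hz).differentiableWithinAt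
  have hA : AnalyticOnNhd ℂ f {z : ℂ | (z.re, z.im) ∈ U} := hdiffOn.analyticOnNhd hVopen
  have hA' : AnalyticOnNhd ℂ (deriv f) {z : ℂ | (z.re, z.im) ∈ U} := hA.deriv
  refine ⟨fun r => (deriv f ⟨r.1, r.2⟩).re, fun r => (deriv f ⟨r.1, r.2⟩).im,
    fun r => (deriv (deriv f) ⟨r.1, r.2⟩).re, fun r => (deriv (deriv f) ⟨r.1, r.2⟩).im,
    ?_⟩
  intro q hq
  have hzV : (⟨q.1, q.2⟩ : ℂ) ∈ {z : ℂ | (z.re, z.im) ∈ U} := hq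
  have hDf : HasDerivAt f (deriv f ⟨q.1, q.2⟩) (⟨q.1, q.2⟩ : ℂ) :=
    (hdiff _ hzV).hasDerivAt
  have hDg : HasDerivAt (deriv f) (deriv (deriv f) ⟨q.1, q.2⟩) (⟨q.1, q.2⟩ : ℂ) :=
    (hA' _ hzV).differentiableAt.hasDerivAt
  obtain ⟨⟨L1, hL1, hL1a, hL1b⟩, ⟨L2, hL2, hL2a, hL2b⟩⟩ := holo_comp_re_im hDf
  obtain ⟨⟨L3, hL3, hL3a, hL3b⟩, ⟨L4, hL4, hL4a, hL4b⟩⟩ := holo_comp_re_im hDg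
  refine ⟨?_, ?_, ?_, ?_, ?_⟩
  · have hd : DifferentiableAt ℝ η q :=
      (hη.contDiffAt (hU.mem_nhds hq)).differentiableAt (by norm_num)
    exact ⟨fderiv ℝ η q, hd.hasFDerivAt, rfl, rfl⟩
  · exact ⟨L1, hL1, hL1a, hL1b⟩
  · refine ⟨-L2, ?_, by simp [hL2a], by simp [hL2b]⟩
    have : (fun r : ℝ × ℝ => pdv η r) = fun r : ℝ × ℝ => -((f ⟨r.1, r.2⟩).im) := by
      funext r
      show pdv η r = -(-pdv η ((⟨r.1, r.2⟩ : ℂ).re, (⟨r.1, r.2⟩ : ℂ).im))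
      rw [neg_neg]
    rw [this]
    exact hL2.neg
  · exact ⟨L3, hL3, hL3a, hL3b⟩
  · exact ⟨L4, hL4, hL4a, hL4b⟩

set_option maxHeartbeats 1000000 in
theorem stmt3 (U : Set (ℝ × ℝ)) (hU : IsOpen U) (η : ℝ × ℝ → ℝ)
    (hη : ContDiffOn ℝ 2 η U)
    (hharm : ∀ p ∈ U, lap η p = 0)
    (hne : ∀ p ∈ U, η p ≠ 0)
    (hdne : ∀ p ∈ U, (pdu η p) ^ 2 + (pdv η p) ^ 2 ≠ 0)
    (ν : ℝ × ℝ → ℝ)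
    (hν : ∀ p, ν p = ((pdu η p) ^ 2 + (pdv η p) ^ 2) / (η p) ^ 2) :
    ∀ p ∈ U, lap (fun q => Real.log (ν q)) p - 2 * ν p = 0 := by
  obtain ⟨c, d, C, D, hpack⟩ := key U hU η hη hharm
  have hS0 : ∀ q ∈ U, pdu η q * pdu η q + pdv η q * pdv η q ≠ 0 := by
    intro q hq
    simpa [pow_two] using hdne q hq
  have hT0 : ∀ q ∈ U, η q * η q ≠ 0 := fun q hq => mul_ne_zero (hne q hq) (hne q hq)
  have hF : ∀ q ∈ U, (fun r => Real.log (ν r)) =ᶠ[nhds q]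
      (fun r => Real.log (pdu η r * pdu η r + pdv η r * pdv η r) - Real.log (η r * η r)) := by
    intro q hq
    filter_upwards [hU.mem_nhds hq] with r hr
    rw [hν r, Real.log_div (hdne r hr) (pow_ne_zero 2 (hne r hr))]
    simp [pow_two]
  have claimA : ∀ q ∈ U, pdu (fun r => Real.log (ν r)) q =
      (2 * pdu η q * c q - 2 * pdv η q * d q) *
        (pdu η q * pdu η q + pdv η q * pdv η q)⁻¹ - 2 * pdu η q * (η q)⁻¹ := by
    intro q hq
    obtain ⟨⟨Lη, hLη, hLη1, hLη2⟩, ⟨La, hLa, hLa1, hLa2⟩, ⟨Lb, hLb, hLb1, hLb2⟩, -, -⟩ :=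
      hpack q hq
    have HS : HasFDerivAt (fun r => pdu η r * pdu η r + pdv η r * pdv η r)
        ((pdu η q • La + pdu η q • La) + (pdv η q • Lb + pdv η q • Lb)) q :=
      (hLa.mul hLa).add (hLb.mul hLb)
    have HT : HasFDerivAt (fun r => η r * η r) (η q • Lη + η q • Lη) q := hLη.mul hLη
    have HF' : HasFDerivAt
        (fun r => Real.log (pdu η r * pdu η r + pdv η r * pdv η r) - Real.log (η r * η r))
        (((pdu η q * pdu η q + pdv η q * pdv η q)⁻¹ •
            ((pdu η q • La + pdu η q • La) + (pdv η q • Lb + pdv η q • Lb))) -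
          ((η q * η q)⁻¹ • (η q • Lη + η q • Lη))) q :=
      (HS.log (hS0 q hq)).sub (HT.log (hT0 q hq))
    rw [pdu_congr (hF q hq), pdu_eq HF']
    simp only [ContinuousLinearMap.coe_sub', Pi.sub_apply, ContinuousLinearMap.coe_smul',
      Pi.smul_apply, ContinuousLinearMap.add_apply, ContinuousLinearMap.smul_apply,
      hLa1, hLb1, hLη1, smul_eq_mul]
    have hη0 := hne q hq
    have hS := hS0 q hq
    field_simp
    ring
  have claimB : ∀ q ∈ U, pdv (fun r => Real.log (ν r)) q =
      (-(2 * pdu η q * d q) - 2 * pdv η q * c q) *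
        (pdu η q * pdu η q + pdv η q * pdv η q)⁻¹ - 2 * pdv η q * (η q)⁻¹ := by
    intro q hq
    obtain ⟨⟨Lη, hLη, hLη1, hLη2⟩, ⟨La, hLa, hLa1, hLa2⟩, ⟨Lb, hLb, hLb1, hLb2⟩, -, -⟩ :=
      hpack q hq
    have HS : HasFDerivAt (fun r => pdu η r * pdu η r + pdv η r * pdv η r)
        ((pdu η q • La + pdu η q • La) + (pdv η q • Lb + pdv η q • Lb)) q :=
      (hLa.mul hLa).add (hLb.mul hLb)
    have HT : HasFDerivAt (fun r => η r * η r) (η q • Lη + η q • Lη) q := hLη.mul hLη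
    have HF' : HasFDerivAt
        (fun r => Real.log (pdu η r * pdu η r + pdv η r * pdv η r) - Real.log (η r * η r))
        (((pdu η q * pdu η q + pdv η q * pdv η q)⁻¹ •
            ((pdu η q • La + pdu η q • La) + (pdv η q • Lb + pdv η q • Lb))) -
          ((η q * η q)⁻¹ • (η q • Lη + η q • Lη))) q :=
      (HS.log (hS0 q hq)).sub (HT.log (hT0 q hq))
    rw [pdv_congr (hF q hq), pdv_eq HF']
    simp only [ContinuousLinearMap.coe_sub', Pi.sub_apply, ContinuousLinearMap.coe_smul',
      Pi.smul_apply, ContinuousLinearMap.add_apply, ContinuousLinearMap.smul_apply,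
      hLa2, hLb2, hLη2, smul_eq_mul]
    have hη0 := hne q hq
    have hS := hS0 q hq
    field_simp
    ring
  intro p hp
  obtain ⟨⟨Lη, hLη, hLη1, hLη2⟩, ⟨La, hLa, hLa1, hLa2⟩, ⟨Lb, hLb, hLb1, hLb2⟩,
    ⟨Lc, hLc, hLc1, hLc2⟩, ⟨Ld, hLd, hLd1, hLd2⟩⟩ := hpack p hp
  have HS : HasFDerivAt (fun r => pdu η r * pdu η r + pdv η r * pdv η r)
      ((pdu η p • La + pdu η p • La) + (pdv η p • Lb + pdv η p • Lb)) p :=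
    (hLa.mul hLa).add (hLb.mul hLb)
  have HSinv : HasFDerivAt (fun r => (pdu η r * pdu η r + pdv η r * pdv η r)⁻¹)
      ((-((pdu η p * pdu η p + pdv η p * pdv η p) ^ 2)⁻¹) •
        ((pdu η p • La + pdu η p • La) + (pdv η p • Lb + pdv η p • Lb))) p :=
    (hasDerivAt_inv (hS0 p hp)).comp_hasFDerivAt p HS
  have Hηinv : HasFDerivAt (fun r => (η r)⁻¹) ((-((η p) ^ 2)⁻¹) • Lη) p :=
    (hasDerivAt_inv (hne p hp)).comp_hasFDerivAt p hLη
  have HΦ : HasFDerivAt (fun r => (2 * pdu η r * c r - 2 * pdv η r * d r) *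
      (pdu η r * pdu η r + pdv η r * pdv η r)⁻¹ - 2 * pdu η r * (η r)⁻¹)
      (((2 * pdu η p * c p - 2 * pdv η p * d p) •
          ((-((pdu η p * pdu η p + pdv η p * pdv η p) ^ 2)⁻¹) •
            ((pdu η p • La + pdu η p • La) + (pdv η p • Lb + pdv η p • Lb))) +
        (pdu η p * pdu η p + pdv η p * pdv η p)⁻¹ •
          (((2 * pdu η p) • Lc + c p • ((2:ℝ) • La)) - ((2 * pdv η p) • Ld + d p • ((2:ℝ) • Lb)))) -
       ((2 * pdu η p) • ((-((η p) ^ 2)⁻¹) • Lη) + (η p)⁻¹ • ((2:ℝ) • La))) p :=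
    ((((hLa.const_mul 2).mul hLc).sub ((hLb.const_mul 2).mul hLd)).mul HSinv).sub
      ((hLa.const_mul 2).mul Hηinv)
  have HΨ : HasFDerivAt (fun r => (-(2 * pdu η r * d r) - 2 * pdv η r * c r) *
      (pdu η r * pdu η r + pdv η r * pdv η r)⁻¹ - 2 * pdv η r * (η r)⁻¹)
      (((-(2 * pdu η p * d p) - 2 * pdv η p * c p) •
          ((-((pdu η p * pdu η p + pdv η p * pdv η p) ^ 2)⁻¹) •
            ((pdu η p • La + pdu η p • La) + (pdv η p • Lb + pdv η p • Lb))) +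
        (pdu η p * pdu η p + pdv η p * pdv η p)⁻¹ •
          ((-((2 * pdu η p) • Ld + d p • ((2:ℝ) • La))) - ((2 * pdv η p) • Lc + c p • ((2:ℝ) • Lb)))) -
       ((2 * pdv η p) • ((-((η p) ^ 2)⁻¹) • Lη) + (η p)⁻¹ • ((2:ℝ) • Lb))) p :=
    (((((hLa.const_mul 2).mul hLd).neg).sub ((hLb.const_mul 2).mul hLc)).mul HSinv).sub
      ((hLb.const_mul 2).mul Hηinv)
  have e1 : pdu (pdu (fun q => Real.log (ν q))) p =
      pdu (fun r => (2 * pdu η r * c r - 2 * pdv η r * d r) *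
        (pdu η r * pdu η r + pdv η r * pdv η r)⁻¹ - 2 * pdu η r * (η r)⁻¹) p := by
    apply pdu_congr
    filter_upwards [hU.mem_nhds hp] with r hr
    exact claimA r hr
  have e2 : pdv (pdv (fun q => Real.log (ν q))) p =
      pdv (fun r => (-(2 * pdu η r * d r) - 2 * pdv η r * c r) *
        (pdu η r * pdu η r + pdv η r * pdv η r)⁻¹ - 2 * pdv η r * (η r)⁻¹) p := by
    apply pdv_congr
    filter_upwards [hU.mem_nhds hp] with r hr
    exact claimB r hr
  show pdu (pdu (fun q => Real.log (ν q))) p + pdv (pdv (fun q => Real.log (ν q))) p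
      - 2 * ν p = 0
  rw [e1, e2, pdu_eq HΦ, pdv_eq HΨ, hν p]
  simp only [ContinuousLinearMap.coe_sub', Pi.sub_apply, ContinuousLinearMap.coe_smul',
    Pi.smul_apply, ContinuousLinearMap.add_apply, ContinuousLinearMap.smul_apply,
    ContinuousLinearMap.coe_neg', Pi.neg_apply,
    hLa1, hLa2, hLb1, hLb2, hLc1, hLc2, hLd1, hLd2, hLη1, hLη2, smul_eq_mul]
  have hS := hS0 p hp
  have hη0 := hne p hp
  field_simp
  ring
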